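/- arXiv:1601.07647 — 8 statements merged into one kernel-verified Lean document; each statement's English description precedes it below -/
import Mathlib

section
/- The transition matrix of the cubelike graph X(C) at time π/2 equals i^{|C|}·P_σ, where σ is the sum in (Z_2)^n of the elements of C. -/
open Matrix Complex

noncomputable def transP {n : ℕ} (x : Fin n → ZMod 2) :
    Matrix (Fin n → ZMod 2) (Fin n → ZMod 2) ℂ :=
  Matrix.of fun u v => if u = x + v then 1 else 0

noncomputable def cubeAdj {n : ℕ} (C : Finset (Fin n → ZMod 2)) :
    Matrix (Fin n → ZMod 2) (Fin n → ZMod 2) ℂ :=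
  Matrix.of fun u v => if u - v ∈ C then 1 else 0

lemma transP_zero {n : ℕ} : transP (0 : Fin n → ZMod 2) = 1 := by
  ext u v
  simp [transP, Matrix.one_apply]

lemma transP_mul {n : ℕ} (x y : Fin n → ZMod 2) :
    transP x * transP y = transP (x + y) := by
  ext u v
  simp only [transP, Matrix.mul_apply, Matrix.of_apply]
  rw [Finset.sum_eq_single (y + v)]
  · simp [add_assoc]
  · intro w _ hw; simp [hw]
  · simp

lemma transP_comm {n : ℕ} (x y : Fin n → ZMod 2) :
    Commute (transP x) (transP y) := by
  unfold Commute SemiconjBy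
  rw [transP_mul, transP_mul, add_comm]

lemma transP_sq {n : ℕ} (x : Fin n → ZMod 2) : transP x * transP x = 1 := by
  rw [transP_mul]
  have : x + x = 0 := by
    funext i
    exact CharTwo.add_self_eq_zero (x i)
  rw [this, transP_zero]

section Generic

variable {𝔸 : Type*} [NormedRing 𝔸] [NormedAlgebra ℂ 𝔸] [CompleteSpace 𝔸]

set_option maxHeartbeats 1000000 in
lemma exp_smul_idem (c : ℂ) (E : 𝔸) (hE : E * E = E) :
    NormedSpace.exp (c • E) = 1 + (Complex.exp c - 1) • E := by
  have hpow : ∀ k : ℕ, E ^ (k + 1) = E := by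
    intro k
    induction k with
    | zero => simp
    | succ k ih => rw [pow_succ, ih, hE]
  have hsum : Summable fun k : ℕ => ((Nat.factorial k : ℂ))⁻¹ • (c • E) ^ k :=
    NormedSpace.expSeries_summable' (𝕂 := ℂ) (c • E)
  have hsumc : Summable fun k : ℕ => ((Nat.factorial k : ℂ))⁻¹ * c ^ k := by
    simpa [smul_eq_mul] using NormedSpace.expSeries_summable' (𝕂 := ℂ) c
  have hsumc' : Summable fun k : ℕ => ((Nat.factorial (k+1) : ℂ))⁻¹ * c ^ (k + 1) :=
    (summable_nat_add_iff 1).mpr hsumc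
  simp only [NormedSpace.exp_eq_tsum ℂ]
  rw [Summable.tsum_eq_zero_add hsum]
  have h1 : ∀ k : ℕ, ((Nat.factorial (k+1) : ℂ))⁻¹ • (c • E) ^ (k + 1)
      = ((((Nat.factorial (k+1) : ℂ))⁻¹) * c ^ (k + 1)) • E := by
    intro k
    rw [smul_pow, hpow, smul_smul]
  simp only [h1]
  rw [Summable.tsum_smul_const hsumc']
  have hexp : Complex.exp c = ∑' k : ℕ, ((Nat.factorial k : ℂ))⁻¹ * c ^ k := by
    rw [Complex.exp_eq_exp_ℂ]
    simp only [NormedSpace.exp_eq_tsum ℂ, smul_eq_mul]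
  have h2 : (∑' k : ℕ, ((Nat.factorial (k+1) : ℂ))⁻¹ * c ^ (k + 1)) = Complex.exp c - 1 := by
    rw [hexp, Summable.tsum_eq_zero_add hsumc]
    simp
  rw [h2]
  simp

lemma exp_smul_invol (c : ℂ) (M : 𝔸) (hM : M * M = 1) :
    NormedSpace.exp (c • M) =
      ((Complex.exp c + Complex.exp (-c)) / 2) • (1 : 𝔸) +
      ((Complex.exp c - Complex.exp (-c)) / 2) • M := by
  set E : 𝔸 := (2⁻¹ : ℂ) • (1 + M) with hEdef
  set F : 𝔸 := (2⁻¹ : ℂ) • (1 - M) with hFdef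
  have hE : E * E = E := by
    rw [hEdef, smul_mul_smul_comm]
    simp only [mul_add, add_mul, mul_sub, sub_mul, mul_one, one_mul, hM]
    module
  have hF : F * F = F := by
    rw [hFdef, smul_mul_smul_comm]
    simp only [mul_add, add_mul, mul_sub, sub_mul, mul_one, one_mul, hM]
    module
  have hEF : E * F = 0 := by
    rw [hEdef, hFdef, smul_mul_smul_comm]
    simp only [mul_add, add_mul, mul_sub, sub_mul, mul_one, one_mul, hM]
    module
  have hFE : F * E = 0 := by
    rw [hEdef, hFdef, smul_mul_smul_comm]
    simp only [mul_add, add_mul, mul_sub, sub_mul, mul_one, one_mul, hM]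
    module
  have hcM : c • M = c • E + (-c) • F := by
    rw [hEdef, hFdef, smul_smul, smul_smul]
    module
  have hcomm : Commute (c • E) ((-c) • F) := by
    apply Commute.smul_left; apply Commute.smul_right
    unfold Commute SemiconjBy
    rw [hEF, hFE]
  letI : NormedAlgebra ℚ 𝔸 := NormedAlgebra.restrictScalars ℚ ℂ 𝔸
  rw [hcM, NormedSpace.exp_add_of_commute hcomm,
    exp_smul_idem c E hE, exp_smul_idem (-c) F hF]
  have hprod : ((1 : 𝔸) + (Complex.exp c - 1) • E) * (1 + (Complex.exp (-c) - 1) • F)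
      = 1 + (Complex.exp (-c) - 1) • F + ((Complex.exp c - 1) • E
        + ((Complex.exp c - 1) * (Complex.exp (-c) - 1)) • (E * F)) := by
    rw [add_mul, one_mul, mul_add, mul_one, smul_mul_smul_comm]
  rw [hprod, hEF, smul_zero, add_zero, hEdef, hFdef, smul_smul, smul_smul]
  module

end Generic

lemma matrix_exp_smul_invol {n : ℕ} (c : ℂ)
    (M : Matrix (Fin n → ZMod 2) (Fin n → ZMod 2) ℂ) (hM : M * M = 1) :
    NormedSpace.exp (c • M) =
      ((Complex.exp c + Complex.exp (-c)) / 2) • (1 : Matrix (Fin n → ZMod 2) (Fin n → ZMod 2) ℂ) +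
      ((Complex.exp c - Complex.exp (-c)) / 2) • M := by
  letI : SeminormedRing (Matrix (Fin n → ZMod 2) (Fin n → ZMod 2) ℂ) :=
    Matrix.linftyOpSemiNormedRing
  letI : NormedRing (Matrix (Fin n → ZMod 2) (Fin n → ZMod 2) ℂ) :=
    Matrix.linftyOpNormedRing
  letI : NormedAlgebra ℂ (Matrix (Fin n → ZMod 2) (Fin n → ZMod 2) ℂ) :=
    Matrix.linftyOpNormedAlgebra
  exact exp_smul_invol c M hM

lemma exp_c_transP {n : ℕ} (x : Fin n → ZMod 2) :
    NormedSpace.exp ((((Real.pi / 2 : ℝ) : ℂ) * Complex.I) • transP x) =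
      Complex.I • transP x := by
  rw [matrix_exp_smul_invol _ _ (transP_sq x)]
  have h1 : Complex.exp (((Real.pi / 2 : ℝ) : ℂ) * Complex.I) = Complex.I := by
    rw [Complex.exp_mul_I, ← Complex.ofReal_cos, ← Complex.ofReal_sin]
    simp [Real.cos_pi_div_two, Real.sin_pi_div_two]
  have h2 : Complex.exp (-(((Real.pi / 2 : ℝ) : ℂ) * Complex.I)) = -Complex.I := by
    rw [← neg_mul, Complex.exp_mul_I, Complex.cos_neg, Complex.sin_neg,
      ← Complex.ofReal_cos, ← Complex.ofReal_sin]
    simp [Real.cos_pi_div_two, Real.sin_pi_div_two]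
  rw [h1, h2]
  norm_num

lemma cubeAdj_eq_sum {n : ℕ} (C : Finset (Fin n → ZMod 2)) :
    cubeAdj C = ∑ x ∈ C, transP x := by
  ext u v
  simp only [cubeAdj, Matrix.of_apply, Matrix.sum_apply, transP]
  have : ∀ x : Fin n → ZMod 2, (u = x + v) ↔ (u - v = x) := by
    intro x
    rw [sub_eq_iff_eq_add, eq_comm]
  simp only [this]
  rw [Finset.sum_ite_eq C (u - v) (fun _ => (1 : ℂ))]

theorem transition_matrix_at_pi_div_two (n : ℕ) (C : Finset (Fin n → ZMod 2)) :
    NormedSpace.exp ((((Real.pi / 2 : ℝ) : ℂ) * Complex.I) • cubeAdj C) =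
      (Complex.I ^ C.card) • transP (∑ x ∈ C, x) := by
  rw [cubeAdj_eq_sum]
  induction C using Finset.cons_induction with
  | empty => simp [transP_zero, NormedSpace.exp_zero]
  | cons a C ha ih =>
    rw [Finset.sum_cons, smul_add]
    have hcomm : Commute ((((Real.pi / 2 : ℝ) : ℂ) * Complex.I) • transP a)
        ((((Real.pi / 2 : ℝ) : ℂ) * Complex.I) • ∑ x ∈ C, transP x) := by
      apply Commute.smul_left; apply Commute.smul_right
      exact Commute.sum_right _ _ _ fun x _ => transP_comm a x
    rw [Matrix.exp_add_of_commute _ _ hcomm, exp_c_transP, ih]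
    rw [Finset.sum_cons, Finset.card_cons, ← transP_mul]
    rw [smul_mul_smul_comm, pow_succ]
    ring_nf
end

section
/- Let C ⊆ (Z_2)^n and let σ be the sum of the elements of C. If σ ≠ 0, then perfect state transfer occurs in the cubelike graph X(C) from every vertex x to x + σ at time π/2; that is, the (x, x+σ) entry of H(π/2) has modulus 1. -/
open Matrix Complex

namespace CubelikeAux

variable {n : ℕ}

/-- translation (permutation) matrix -/
noncomputable def P (c : Fin n → ZMod 2) :
    Matrix (Fin n → ZMod 2) (Fin n → ZMod 2) ℂ :=
  Matrix.of fun u v => if u - v = c then 1 else 0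

lemma P_mul (a b : Fin n → ZMod 2) : P a * P b = P (a + b) := by
  ext u v
  simp only [P, Matrix.mul_apply, Matrix.of_apply]
  have h1 : ∀ w : Fin n → ZMod 2,
      (if u - w = a then (1:ℂ) else 0) * (if w - v = b then 1 else 0)
        = if w = u - a then (if w - v = b then (1:ℂ) else 0) else 0 := by
    intro w
    by_cases h : u - w = a
    · have hw : w = u - a := by rw [← h]; abel
      simp [h, hw]
    · have hw : w ≠ u - a := fun hw => h (by rw [hw]; abel)
      simp [h, hw]
  rw [Finset.sum_congr rfl fun w _ => h1 w, Finset.sum_ite_eq' Finset.univ (u - a)]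
  simp only [Finset.mem_univ, if_true]
  have : u - a - v = b ↔ u - v = a + b := by
    constructor
    · intro h; rw [← h]; abel
    · intro h
      have : b = u - v - a := by rw [h]; abel
      rw [this]; abel
  by_cases h : u - v = a + b
  · rw [if_pos (this.mpr h), if_pos h]
  · rw [if_neg (fun hh => h (this.mp hh)), if_neg h]

lemma P_zero : P (0 : Fin n → ZMod 2) = 1 := by
  ext u v
  simp [P, Matrix.one_apply, sub_eq_zero]

lemma add_self_zero (a : Fin n → ZMod 2) : a + a = 0 := by
  funext i
  have : ∀ x : ZMod 2, x + x = 0 := by decide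
  exact this (a i)

lemma P_sq (a : Fin n → ZMod 2) : P a * P a = 1 := by
  rw [P_mul, add_self_zero, P_zero]

lemma cubeAdj_eq_sum (C : Finset (Fin n → ZMod 2)) :
    cubeAdj C = ∑ c ∈ C, P c := by
  ext u v
  simp only [cubeAdj, Matrix.of_apply, Matrix.sum_apply, P]
  rw [Finset.sum_ite_eq C (u - v) (fun _ => (1:ℂ))]

lemma exp_key (u : Matrix (Fin n → ZMod 2) (Fin n → ZMod 2) ℂ) (hu : u * u = 1) :
    NormedSpace.exp ((((Real.pi / 2 : ℝ) : ℂ) * Complex.I) • u) = Complex.I • u := by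
  letI : SeminormedRing (Matrix (Fin n → ZMod 2) (Fin n → ZMod 2) ℂ) :=
    Matrix.linftyOpSemiNormedRing
  letI : NormedRing (Matrix (Fin n → ZMod 2) (Fin n → ZMod 2) ℂ) :=
    Matrix.linftyOpNormedRing
  letI : NormedAlgebra ℂ (Matrix (Fin n → ZMod 2) (Fin n → ZMod 2) ℂ) :=
    Matrix.linftyOpNormedAlgebra
  set c : ℂ := ((Real.pi / 2 : ℝ) : ℂ) * Complex.I with hc
  have hu2 : u ^ 2 = 1 := by rw [pow_two, hu]
  have hpe : ∀ k : ℕ, (c • u) ^ (2 * k) = (c ^ (2 * k)) • (1 : Matrix _ _ ℂ) := by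
    intro k
    rw [smul_pow, pow_mul u, hu2, one_pow]
  have hpo : ∀ k : ℕ, (c • u) ^ (2 * k + 1) = (c ^ (2 * k + 1)) • u := by
    intro k
    rw [smul_pow, pow_succ u, pow_mul u, hu2, one_pow, one_mul]
  -- even part sums to 0
  have hcos : HasSum (fun k : ℕ => c ^ (2 * k) / (Nat.factorial (2 * k) : ℂ)) 0 := by
    have := Complex.hasSum_cos' ((Real.pi / 2 : ℝ) : ℂ)
    rw [← Complex.ofReal_cos, Real.cos_pi_div_two, Complex.ofReal_zero] at this
    exact this
  have hsin : HasSum (fun k : ℕ => c ^ (2 * k + 1) / (Nat.factorial (2 * k + 1) : ℂ)) Complex.I := by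
    have h1 := Complex.hasSum_sin' ((Real.pi / 2 : ℝ) : ℂ)
    rw [← Complex.ofReal_sin, Real.sin_pi_div_two, Complex.ofReal_one] at h1
    have h2 := h1.mul_right Complex.I
    rw [one_mul] at h2
    have h3 : (fun k : ℕ => c ^ (2 * k + 1) / (Nat.factorial (2 * k + 1) : ℂ)) =
        fun i : ℕ => (((Real.pi / 2 : ℝ) : ℂ) * Complex.I) ^ (2 * i + 1) /
          (Nat.factorial (2 * i + 1) : ℂ) / Complex.I * Complex.I := by
      funext k
      rw [div_mul_cancel₀ _ Complex.I_ne_zero]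
    rw [h3]
    exact h2
  have he : HasSum (fun k : ℕ => ((Nat.factorial (2 * k) : ℂ)⁻¹) • (c • u) ^ (2 * k))
      ((0 : ℂ) • (1 : Matrix _ _ ℂ)) := by
    have := hcos.smul_const (1 : Matrix (Fin n → ZMod 2) (Fin n → ZMod 2) ℂ)
    convert this using 2 with k
    rw [hpe k, smul_smul, div_eq_inv_mul]
  have ho : HasSum (fun k : ℕ => ((Nat.factorial (2 * k + 1) : ℂ)⁻¹) • (c • u) ^ (2 * k + 1))
      (Complex.I • u) := by
    have := hsin.smul_const u
    convert this using 2 with k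
    rw [hpo k, smul_smul, div_eq_inv_mul]
  have htot : HasSum (fun m : ℕ => (((Nat.factorial m : ℂ))⁻¹) • (c • u) ^ m)
      ((0 : ℂ) • (1 : Matrix _ _ ℂ) + Complex.I • u) := HasSum.even_add_odd he ho
  rw [zero_smul, zero_add] at htot
  rw [NormedSpace.exp_eq_tsum (𝕂 := ℂ)]
  exact htot.tsum_eq

lemma exp_sum (s : Finset (Fin n → ZMod 2)) :
    NormedSpace.exp ((((Real.pi / 2 : ℝ) : ℂ) * Complex.I) • ∑ c ∈ s, P c)
      = (Complex.I ^ s.card) • P (∑ c ∈ s, c) := by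
  classical
  induction s using Finset.induction with
  | empty => simp [P_zero, NormedSpace.exp_zero]
  | insert a s ha ih =>
    rw [Finset.sum_insert ha, smul_add]
    have hcomm : Commute ((((Real.pi / 2 : ℝ) : ℂ) * Complex.I) • P a)
        ((((Real.pi / 2 : ℝ) : ℂ) * Complex.I) • ∑ c ∈ s, P c) := by
      apply Commute.smul_left
      apply Commute.smul_right
      apply Commute.sum_right
      intro i _
      unfold Commute SemiconjBy
      rw [P_mul, P_mul, add_comm]
    rw [Matrix.exp_add_of_commute _ _ hcomm, exp_key _ (P_sq a), ih,
      Finset.sum_insert ha, Finset.card_insert_of_notMem ha]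
    rw [smul_mul_smul_comm, P_mul, pow_succ, mul_comm (Complex.I ^ s.card) Complex.I]

end CubelikeAux

theorem cubelike_pst (n : ℕ) (C : Finset (Fin n → ZMod 2))
    (σ : Fin n → ZMod 2) (hσ : σ = ∑ x ∈ C, x) (hσ0 : σ ≠ 0) (x : Fin n → ZMod 2) :
    ‖(NormedSpace.exp ((((Real.pi / 2 : ℝ) : ℂ) * Complex.I) • cubeAdj C) x (x + σ))‖ = 1 := by
  rw [CubelikeAux.cubeAdj_eq_sum, CubelikeAux.exp_sum, ← hσ]
  have hxy : x - (x + σ) = σ := by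
    have := CubelikeAux.add_self_zero σ
    rw [sub_add_eq_sub_sub]
    rw [sub_self, zero_sub]
    exact neg_eq_of_add_eq_zero_right this
  simp only [Matrix.smul_apply, CubelikeAux.P, Matrix.of_apply, hxy, smul_eq_mul]
  simp [Complex.norm_I]
end

section
/- Let G₁ and G₂ be graphs with adjacency matrices A₁ and A₂, and let H(t) = exp(i t A₁). If A₂ has spectral decomposition A₂ = Σ_{s=1}^{q} μ_s F_s (with the F_s orthogonal projections summing to I, F_r F_s = 0 for r ≠ s), then exp(i t (A₁ ⊗ A₂)) = Σ_{s=1}^{q} H(μ_s t) ⊗ F_s. -/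
open Matrix Kronecker Complex

theorem exp_kronecker_spectral {m p : Type*} [Fintype m] [DecidableEq m]
    [Fintype p] [DecidableEq p] (q : ℕ)
    (A₁ : Matrix m m ℂ) (A₂ : Matrix p p ℂ)
    (hA₁ : A₁.IsHermitian) (hA₂ : A₂.IsHermitian)
    (μ : Fin q → ℝ) (F : Fin q → Matrix p p ℂ)
    (hdec : A₂ = ∑ s, (μ s : ℂ) • F s)
    (hsum : (∑ s, F s) = 1)
    (hproj : ∀ s, F s * F s = F s)
    (horth : ∀ r s, r ≠ s → F r * F s = 0)
    (t : ℝ) :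
    NormedSpace.exp (((t : ℂ) * Complex.I) • (A₁ ⊗ₖ A₂)) =
      ∑ s, (NormedSpace.exp ((((μ s * t : ℝ) : ℂ) * Complex.I) • A₁)) ⊗ₖ F s := by
  letI : SeminormedRing (Matrix m m ℂ) := Matrix.linftyOpSemiNormedRing
  letI : NormedRing (Matrix m m ℂ) := Matrix.linftyOpNormedRing
  letI : NormedAlgebra ℂ (Matrix m m ℂ) := Matrix.linftyOpNormedAlgebra
  letI : NormedAlgebra ℚ (Matrix m m ℂ) := Matrix.linftyOpNormedAlgebra
  letI : SeminormedRing (Matrix (m × p) (m × p) ℂ) := Matrix.linftyOpSemiNormedRing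
  letI : NormedRing (Matrix (m × p) (m × p) ℂ) := Matrix.linftyOpNormedRing
  letI : NormedAlgebra ℂ (Matrix (m × p) (m × p) ℂ) := Matrix.linftyOpNormedAlgebra
  have hone : (∑ s, (1 : Matrix m m ℂ) ⊗ₖ F s) = 1 := by
    calc (∑ s, (1 : Matrix m m ℂ) ⊗ₖ F s)
        = (1 : Matrix m m ℂ) ⊗ₖ (∑ s, F s) := by
          induction (Finset.univ : Finset (Fin q)) using Finset.induction_on with
          | empty => simp [Matrix.kronecker_zero]
          | insert a s h ih =>
            rw [Finset.sum_insert h, Finset.sum_insert h, Matrix.kronecker_add, ih]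
      _ = 1 := by rw [hsum, Matrix.one_kronecker_one]
  -- the algebra homomorphism `M ↦ ∑ s, M s ⊗ F s`
  let Φ : (Fin q → Matrix m m ℂ) →ₐ[ℂ] Matrix (m × p) (m × p) ℂ :=
    { toFun := fun M => ∑ s, M s ⊗ₖ F s
      map_one' := hone
      map_mul' := fun M N => by
        show (∑ s, ((M * N) s) ⊗ₖ F s) = (∑ r, M r ⊗ₖ F r) * (∑ s, N s ⊗ₖ F s)
        rw [Finset.sum_mul_sum]
        simp only [← Matrix.mul_kronecker_mul]
        symm
        calc (∑ r, ∑ s, (M r * N s) ⊗ₖ (F r * F s))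
            = ∑ r, (M r * N r) ⊗ₖ (F r * F r) := by
              refine Finset.sum_congr rfl fun r _ => Finset.sum_eq_single r ?_ ?_
              · intro b _ hb
                rw [horth r b (Ne.symm hb), Matrix.kronecker_zero]
              · intro h; exact absurd (Finset.mem_univ r) h
          _ = ∑ s, ((M * N) s) ⊗ₖ F s := by
              refine Finset.sum_congr rfl fun r _ => ?_
              rw [hproj r, Pi.mul_apply]
      map_zero' := by simp [Matrix.zero_kronecker]
      map_add' := fun M N => by
        show (∑ s, ((M + N) s) ⊗ₖ F s) = (∑ s, M s ⊗ₖ F s) + ∑ s, N s ⊗ₖ F s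
        rw [← Finset.sum_add_distrib]
        exact Finset.sum_congr rfl fun s _ => by rw [Pi.add_apply, Matrix.add_kronecker]
      commutes' := fun a => by
        show (∑ s, (algebraMap ℂ (Fin q → Matrix m m ℂ) a s) ⊗ₖ F s)
            = algebraMap ℂ (Matrix (m × p) (m × p) ℂ) a
        simp only [Pi.algebraMap_apply, Algebra.algebraMap_eq_smul_one,
          Matrix.smul_kronecker]
        rw [← Finset.smul_sum, hone] }
  have hcont : Continuous Φ := Φ.toLinearMap.continuous_of_finiteDimensional
  have key := NormedSpace.map_exp Φ hcont
    (fun s => ((((μ s * t : ℝ) : ℂ) * Complex.I) • A₁))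
  have hΦx : Φ (fun s => ((((μ s * t : ℝ) : ℂ) * Complex.I) • A₁)) =
      ((t : ℂ) * Complex.I) • (A₁ ⊗ₖ A₂) := by
    show (∑ s, ((((μ s * t : ℝ) : ℂ) * Complex.I) • A₁) ⊗ₖ F s) = _
    rw [hdec]
    have : ∀ s : Fin q, A₁ ⊗ₖ ((μ s : ℂ) • F s) = (μ s : ℂ) • (A₁ ⊗ₖ F s) :=
      fun s => Matrix.kronecker_smul _ _ _
    calc (∑ s, ((((μ s * t : ℝ) : ℂ) * Complex.I) • A₁) ⊗ₖ F s)
        = ∑ s, ((t : ℂ) * Complex.I) • ((μ s : ℂ) • (A₁ ⊗ₖ F s)) := by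
          refine Finset.sum_congr rfl fun s _ => ?_
          rw [Matrix.smul_kronecker, smul_smul]
          congr 1
          push_cast
          ring
      _ = ((t : ℂ) * Complex.I) • ∑ s, A₁ ⊗ₖ ((μ s : ℂ) • F s) := by
          rw [Finset.smul_sum]; simp_rw [this]
      _ = ((t : ℂ) * Complex.I) • (A₁ ⊗ₖ ∑ s, (μ s : ℂ) • F s) := by
          congr 1
          induction (Finset.univ : Finset (Fin q)) using Finset.induction_on with
          | empty => simp [Matrix.kronecker_zero]
          | insert a s h ih =>
            rw [Finset.sum_insert h, Finset.sum_insert h, Matrix.kronecker_add, ih]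
  have hΦexp : Φ (NormedSpace.exp (fun s => ((((μ s * t : ℝ) : ℂ) * Complex.I) • A₁))) =
      ∑ s, (NormedSpace.exp ((((μ s * t : ℝ) : ℂ) * Complex.I) • A₁)) ⊗ₖ F s := by
    show (∑ s, (NormedSpace.exp (fun s => ((((μ s * t : ℝ) : ℂ) * Complex.I) • A₁)) s) ⊗ₖ F s)
        = _
    refine Finset.sum_congr rfl fun s _ => ?_
    erw [Pi.coe_exp]; rfl
  rw [← hΦx]; erw [← key, hΦexp]
end

section
/- Let C ⊆ (Z_2)^n be such that the sum of the elements of C is 0 and |C| ≡ 0 (mod 4). Then for every symmetric matrix B with integer eigenvalues, exp(i(π/2)(A ⊗ B)) = I, where A is the adjacency matrix of the cubelike graph X(C). -/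
open Matrix Kronecker Complex

namespace ExpKronAux

/-- The sign character of `ZMod 2`. -/
noncomputable def χ (x : ZMod 2) : ℂ := if x = 0 then 1 else -1

lemma χ_zero : χ 0 = 1 := by simp [χ]

lemma χ_one : χ 1 = -1 := by norm_num [χ]

lemma χ_add (a b : ZMod 2) : χ (a + b) = χ a * χ b := by
  have h : ∀ x : ZMod 2, x = 0 ∨ x = 1 := by decide
  rcases h a with ha | ha <;> rcases h b with hb | hb <;> subst ha <;> subst hb <;>
    norm_num [χ, (by decide : (1 + 1 : ZMod 2) = 0)] <;> decide

variable {n : ℕ}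

/-- dot product on `(ZMod 2)^n`. -/
def dot (u v : Fin n → ZMod 2) : ZMod 2 := ∑ i, u i * v i

lemma dot_comm (u v : Fin n → ZMod 2) : dot u v = dot v u := by
  simp [dot, mul_comm]

lemma dot_add_left (u w v : Fin n → ZMod 2) :
    dot (u + w) v = dot u v + dot w v := by
  simp [dot, add_mul, Finset.sum_add_distrib]

lemma dot_add_right (u v w : Fin n → ZMod 2) :
    dot u (v + w) = dot u v + dot u w := by
  simp [dot, mul_add, Finset.sum_add_distrib]

lemma dot_single (w : Fin n → ZMod 2) (i : Fin n) :
    dot w (Pi.single i 1) = w i := by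
  simp [dot, Pi.single_apply, mul_ite, Finset.sum_ite_eq']

/-- The Hadamard(character) matrix. -/
noncomputable def Had (n : ℕ) : Matrix (Fin n → ZMod 2) (Fin n → ZMod 2) ℂ :=
  Matrix.of fun u v => χ (dot u v)

lemma sum_char {w : Fin n → ZMod 2} (hw : w ≠ 0) :
    ∑ v : Fin n → ZMod 2, χ (dot w v) = 0 := by
  obtain ⟨i, hi⟩ : ∃ i, w i ≠ 0 := by
    by_contra h
    push_neg at h
    exact hw (funext fun i => h i)
  have hwi : w i = 1 := by
    have h2 : ∀ x : ZMod 2, x ≠ 0 → x = 1 := by decide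
    exact h2 _ hi
  have key : ∑ v : Fin n → ZMod 2, χ (dot w (v + Pi.single i 1))
      = ∑ v : Fin n → ZMod 2, χ (dot w v) :=
    Equiv.sum_comp (Equiv.addRight (Pi.single i 1)) (fun v => χ (dot w v))
  have key2 : ∑ v : Fin n → ZMod 2, χ (dot w v)
      = -∑ v : Fin n → ZMod 2, χ (dot w v) := by
    conv_lhs => rw [← key]
    rw [← Finset.sum_neg_distrib]
    refine Finset.sum_congr rfl fun v _ => ?_
    rw [dot_add_right, dot_single, hwi, χ_add, χ_one]
    ring
  linear_combination key2 / 2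

lemma pi_add_self (u : Fin n → ZMod 2) : u + u = 0 := by
  funext i
  have : ∀ x : ZMod 2, x + x = 0 := by decide
  exact this _

lemma pi_sub_eq_add (u v : Fin n → ZMod 2) : u - v = u + v := by
  funext i
  have : ∀ x y : ZMod 2, x - y = x + y := by decide
  exact this _ _

lemma Had_mul_Had : Had n * Had n = ((2 : ℂ) ^ n) • 1 := by
  ext u w
  simp only [Matrix.mul_apply, Had, Matrix.of_apply, Matrix.smul_apply,
    Matrix.one_apply, smul_eq_mul]
  have : ∀ v, χ (dot u v) * χ (dot v w) = χ (dot (u + w) v) := by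
    intro v
    rw [dot_add_left, χ_add, dot_comm v w]
  rw [Finset.sum_congr rfl fun v _ => this v]
  by_cases huw : u = w
  · subst huw
    rw [pi_add_self]
    simp [dot, χ_zero, Finset.card_univ, mul_comm]
  · have hne : u + w ≠ 0 := by
      intro h
      apply huw
      have h2 : u + w + w = 0 + w := by rw [h]
      rwa [add_assoc, pi_add_self, add_zero, zero_add] at h2
    rw [sum_char hne]
    simp [huw]

/-- The eigenvalue function of the cubelike graph. -/
noncomputable def lam (C : Finset (Fin n → ZMod 2)) (w : Fin n → ZMod 2) : ℂ :=
  ∑ x ∈ C, χ (dot w x)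

lemma cubeAdj_mul_Had (C : Finset (Fin n → ZMod 2)) :
    cubeAdj C * Had n = Had n * Matrix.diagonal (lam C) := by
  ext u w
  rw [Matrix.mul_diagonal]
  simp only [Matrix.mul_apply, cubeAdj, Had, Matrix.of_apply, ite_mul, one_mul,
    zero_mul]
  rw [Fintype.sum_equiv (Equiv.addLeft u)
    (fun v => if u - v ∈ C then χ (dot v w) else 0)
    (fun x => if x ∈ C then χ (dot (u + x) w) else 0)
    (fun x => by
      have h1 : u + (u + x) = x := by rw [← add_assoc, pi_add_self u, zero_add]
      simp only [Equiv.coe_addLeft, pi_sub_eq_add, h1])]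
  rw [Finset.sum_ite_mem, Finset.univ_inter]
  unfold lam
  rw [Finset.mul_sum]
  refine Finset.sum_congr rfl fun x hx => ?_
  rw [dot_add_left, χ_add, dot_comm x w]

lemma lam_int {C : Finset (Fin n → ZMod 2)} (hσ : (∑ x ∈ C, x) = 0)
    (hcard : C.card % 4 = 0) (w : Fin n → ZMod 2) :
    ∃ m : ℤ, lam C w = ((4 * m : ℤ) : ℂ) := by
  classical
  set N := (C.filter fun x => dot w x = 1).card with hN
  have hsplit : lam C w = (C.card : ℂ) - 2 * N := by
    have hterm : ∀ a : ZMod 2, χ a = 1 - 2 * (if a = 1 then (1 : ℂ) else 0) := by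
      intro a
      rcases (by decide : ∀ x : ZMod 2, x = 0 ∨ x = 1) a with rfl | rfl <;> norm_num [χ]
    unfold lam
    rw [Finset.sum_congr rfl fun x _ => hterm (dot w x)]
    rw [Finset.sum_sub_distrib, ← Finset.mul_sum, Finset.sum_boole, Finset.sum_const,
      nsmul_eq_mul, mul_one]
  have hNzmod : (N : ZMod 2) = 0 := by
    have h1 : ∀ a : ZMod 2, (if a = 1 then (1 : ZMod 2) else 0) = a := by decide
    have : (N : ZMod 2) = ∑ x ∈ C, (if dot w x = 1 then (1 : ZMod 2) else 0) := by
      rw [Finset.sum_boole, hN]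
    rw [this, Finset.sum_congr rfl fun x _ => h1 (dot w x)]
    have hswap : ∑ x ∈ C, dot w x = dot w (∑ x ∈ C, x) := by
      unfold dot
      rw [Finset.sum_comm]
      refine Finset.sum_congr rfl fun i _ => ?_
      rw [← Finset.mul_sum]
      simp
    rw [hswap, hσ]
    simp [dot]
  have hN2 : 2 ∣ N := (ZMod.natCast_eq_zero_iff N 2).mp hNzmod
  obtain ⟨b, hb⟩ := hN2
  obtain ⟨a, ha⟩ : 4 ∣ C.card := Nat.dvd_of_mod_eq_zero hcard
  refine ⟨(a : ℤ) - b, ?_⟩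
  rw [hsplit, ha, hb]
  push_cast
  ring

end ExpKronAux

open ExpKronAux

theorem exp_kronecker_identity (n : ℕ) (C : Finset (Fin n → ZMod 2))
    (hσ : (∑ x ∈ C, x) = 0) (hcard : C.card % 4 = 0)
    {p : Type*} [Fintype p] [DecidableEq p]
    (B : Matrix p p ℂ) (hB : B.IsHermitian)
    (hint : ∀ μ ∈ spectrum ℂ B, ∃ k : ℤ, μ = (k : ℂ)) :
    NormedSpace.exp ((((Real.pi / 2 : ℝ) : ℂ) * Complex.I) • (cubeAdj C ⊗ₖ B)) = 1 := by
  classical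
  set c : ℂ := ((Real.pi / 2 : ℝ) : ℂ) * Complex.I with hc
  set H := Had n with hH
  set H' : Matrix (Fin n → ZMod 2) (Fin n → ZMod 2) ℂ := ((2 : ℂ) ^ n)⁻¹ • H with hH'
  have h2n : (2 : ℂ) ^ n ≠ 0 := pow_ne_zero _ two_ne_zero
  have hHH' : H * H' = 1 := by
    rw [hH', Matrix.mul_smul, Had_mul_Had, smul_smul, inv_mul_cancel₀ h2n, one_smul]
  have hH'H : H' * H = 1 := by
    rw [hH', Matrix.smul_mul, Had_mul_Had, smul_smul, inv_mul_cancel₀ h2n, one_smul]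
  have hA : cubeAdj C = H * Matrix.diagonal (lam C) * H' := by
    calc cubeAdj C = cubeAdj C * (H * H') := by rw [hHH', mul_one]
    _ = (cubeAdj C * H) * H' := by rw [mul_assoc]
    _ = H * Matrix.diagonal (lam C) * H' := by rw [cubeAdj_mul_Had]
  set U : Matrix p p ℂ := (hB.eigenvectorUnitary : Matrix p p ℂ) with hU
  set Uc : Matrix p p ℂ := star U with hUc
  have hUUc : U * Uc = 1 := Matrix.mem_unitaryGroup_iff.mp hB.eigenvectorUnitary.2
  have hUcU : Uc * U = 1 := Matrix.mem_unitaryGroup_iff'.mp hB.eigenvectorUnitary.2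
  set μ : p → ℂ := fun j => ((hB.eigenvalues j : ℝ) : ℂ) with hμ
  have hBeq : B = U * Matrix.diagonal μ * Uc := by
    have := hB.spectral_theorem
    rw [Unitary.conjStarAlgAut_apply] at this
    exact this
  -- eigenvalues of B are integers
  have hμint : ∀ j, ∃ k : ℤ, μ j = (k : ℂ) := by
    intro j
    apply hint
    exact spectrum.algebraMap_mem ℂ (hB.eigenvalues_mem_spectrum_real j)
  have hWW' : (H ⊗ₖ U) * (H' ⊗ₖ Uc) = 1 := by
    rw [← Matrix.mul_kronecker_mul, hHH', hUUc, Matrix.one_kronecker_one]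
  have hW'W : (H' ⊗ₖ Uc) * (H ⊗ₖ U) = 1 := by
    rw [← Matrix.mul_kronecker_mul, hH'H, hUcU, Matrix.one_kronecker_one]
  have hWinv : (H ⊗ₖ U)⁻¹ = H' ⊗ₖ Uc := Matrix.inv_eq_right_inv hWW'
  have hWunit : IsUnit (H ⊗ₖ U) := ⟨⟨_, _, hWW', hW'W⟩, rfl⟩
  have hkron : c • (cubeAdj C ⊗ₖ B)
      = (H ⊗ₖ U) * (c • (Matrix.diagonal (lam C) ⊗ₖ Matrix.diagonal μ)) * (H ⊗ₖ U)⁻¹ := by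
    rw [hWinv, hA, hBeq, Matrix.mul_kronecker_mul, Matrix.mul_kronecker_mul,
      mul_smul_comm, smul_mul_assoc]
  rw [hkron, Matrix.exp_conj _ _ hWunit]
  have hdiag : c • (Matrix.diagonal (lam C) ⊗ₖ Matrix.diagonal μ)
      = Matrix.diagonal (c • fun x : (Fin n → ZMod 2) × p => lam C x.1 * μ x.2) := by
    rw [Matrix.diagonal_kronecker_diagonal, ← Matrix.diagonal_smul]
  rw [hdiag, Matrix.exp_diagonal]
  have hentries : (NormedSpace.exp
      (c • fun x : (Fin n → ZMod 2) × p => lam C x.1 * μ x.2)) = fun _ => 1 := by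
    funext x
    rw [Pi.coe_exp]
    obtain ⟨m, hm⟩ := lam_int hσ hcard x.1
    obtain ⟨k, hk⟩ := hμint x.2
    have : (c • fun y : (Fin n → ZMod 2) × p => lam C y.1 * μ y.2) x
        = ((m * k : ℤ) : ℂ) * (2 * (Real.pi : ℂ) * Complex.I) := by
      simp only [Pi.smul_apply, smul_eq_mul, hm, hk, hc]
      push_cast
      ring
    rw [this, ← Complex.exp_eq_exp_ℂ, Complex.exp_int_mul_two_pi_mul_I]
  rw [hentries, Matrix.diagonal_one, mul_one, hWinv, hWW']
end

section
/- If a connected vertex-transitive graph admits perfect state transfer between two distinct vertices at some time τ, then the graph has an even number of vertices. -/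
open Matrix Complex

private lemma even_card_of_fpf {V : Type*} [Fintype V] [DecidableEq V]
    (σ : V → V) (hinv : Function.Involutive σ) (hfpf : ∀ w, σ w ≠ w) :
    Even (Fintype.card V) := by
  classical
  suffices h : ∀ n (s : Finset V), s.card = n → (∀ w ∈ s, σ w ∈ s) → Even s.card by
    have := h (Finset.univ : Finset V).card Finset.univ rfl (fun w _ => Finset.mem_univ _)
    simpa [Finset.card_univ] using this
  intro n
  induction n using Nat.strong_induction_on with
  | _ n ih =>
    intro s hcard hclosed
    rcases s.eq_empty_or_nonempty with rfl | ⟨w, hw⟩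
    · simp
    have hσw : σ w ∈ s := hclosed w hw
    set t := s \ {w, σ w} with ht
    have htclosed : ∀ x ∈ t, σ x ∈ t := by
      intro x hx
      rw [ht, Finset.mem_sdiff] at hx ⊢
      refine ⟨hclosed x hx.1, ?_⟩
      simp only [Finset.mem_insert, Finset.mem_singleton] at hx ⊢
      push_neg at hx ⊢
      exact ⟨fun h => hx.2.2 (by rw [← hinv x, h]),
        fun h => hx.2.1 (by rw [← hinv x, h, hinv])⟩
    have hpair : ({w, σ w} : Finset V) ⊆ s := by
      intro x hx
      simp only [Finset.mem_insert, Finset.mem_singleton] at hx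
      rcases hx with rfl | rfl <;> assumption
    have hpaircard : ({w, σ w} : Finset V).card = 2 :=
      Finset.card_pair (Ne.symm (hfpf w))
    have hsum : t.card + 2 = s.card := by
      rw [← hpaircard, ht]; exact Finset.card_sdiff_add_card_eq_card hpair
    have hlt : t.card < n := by rw [← hcard, ← hsum]; omega
    obtain ⟨k, hk⟩ := ih t.card hlt t rfl htclosed
    exact ⟨k + 1, by omega⟩

theorem vertex_transitive_pst_even_order {V : Type*} [Fintype V] [DecidableEq V]
    (G : SimpleGraph V) [DecidableRel G.Adj]
    (hconn : G.Connected)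
    (htrans : ∀ u v : V, ∃ φ : G ≃g G, φ u = v)
    (u v : V) (huv : u ≠ v) (τ : ℝ)
    (hpst : ‖
      (NormedSpace.exp (((τ : ℂ) * Complex.I) • G.adjMatrix ℂ) u v)‖ = 1) :
    Even (Fintype.card V) := by
  classical
  set A : Matrix V V ℂ := G.adjMatrix ℂ with hA
  set M : Matrix V V ℂ := ((τ : ℂ) * Complex.I) • A with hM
  set H : Matrix V V ℂ := NormedSpace.exp M with hH
  -- symmetry of H
  have hAsymm : Aᵀ = A := G.transpose_adjMatrix
  have hMsymm : Mᵀ = M := by rw [hM, Matrix.transpose_smul, hAsymm]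
  have hHsymm : Hᵀ = H := by rw [hH, ← Matrix.exp_transpose, hMsymm]
  -- H is unitary
  have hAconj : Aᴴ = A := by
    ext i j
    simp [Matrix.conjTranspose_apply, hA, SimpleGraph.adjMatrix_apply,
      apply_ite (star : ℂ → ℂ), G.adj_comm]
  have hcstar : star ((τ : ℂ) * Complex.I) = -((τ : ℂ) * Complex.I) := by
    simp [Complex.star_def, _root_.map_mul, Complex.conj_ofReal, Complex.conj_I, mul_neg]
  have hMconj : Mᴴ = -M := by
    rw [hM, Matrix.conjTranspose_smul, hAconj, hcstar, neg_smul]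
  have hHunit : H * Hᴴ = 1 := by
    rw [hH, ← Matrix.exp_conjTranspose, hMconj,
      ← Matrix.exp_add_of_commute M (-M) (Commute.neg_right (Commute.refl M)),
      add_neg_cancel, NormedSpace.exp_zero]
  -- rows have norm 1
  have hrow : ∀ w : V, ∑ x, Complex.normSq (H w x) = 1 := by
    intro w
    have h1 : (H * Hᴴ) w w = 1 := by rw [hHunit]; simp [Matrix.one_apply]
    rw [Matrix.mul_apply] at h1
    have h2 : ∀ x, H w x * Hᴴ x w = (Complex.normSq (H w x) : ℂ) := by
      intro x
      rw [Matrix.conjTranspose_apply]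
      exact Complex.mul_conj _
    rw [Finset.sum_congr rfl (fun x _ => h2 x)] at h1
    exact_mod_cast h1
  -- uniqueness: one entry of norm 1 forces the others to vanish
  have hzero : ∀ w x, Complex.normSq (H w x) = 1 → ∀ y, y ≠ x → H w y = 0 := by
    intro w x hx y hy
    have hsum := hrow w
    rw [← Finset.add_sum_erase _ _ (Finset.mem_univ x), hx] at hsum
    have h0 : ∑ z ∈ Finset.univ.erase x, Complex.normSq (H w z) = 0 := by linarith
    have := (Finset.sum_eq_zero_iff_of_nonneg
      (fun z _ => Complex.normSq_nonneg (H w z))).mp h0 y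
      (Finset.mem_erase.mpr ⟨hy, Finset.mem_univ y⟩)
    exact Complex.normSq_eq_zero.mp this
  -- invariance under automorphisms
  have hauto : ∀ (φ : G ≃g G) (w x : V), H (φ w) (φ x) = H w x := by
    intro φ w x
    set e : V ≃ V := φ.toEquiv with he
    have hAe : A.submatrix e e = A := by
      ext i j
      simp [Matrix.submatrix_apply, hA, SimpleGraph.adjMatrix_apply, he, φ.map_adj_iff]
    have hMe : M.submatrix ⇑e ⇑e = M := by
      ext i j
      simp only [Matrix.submatrix_apply, hM, Matrix.smul_apply]
      rw [show A (e i) (e j) = A i j from congrFun (congrFun hAe i) j]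
    have hsub : (NormedSpace.exp M).submatrix ⇑e ⇑e
        = NormedSpace.exp (M.submatrix ⇑e ⇑e) := by
      letI : SeminormedRing (Matrix V V ℂ) := Matrix.linftyOpSemiNormedRing
      letI : NormedRing (Matrix V V ℂ) := Matrix.linftyOpNormedRing
      letI : NormedAlgebra ℂ (Matrix V V ℂ) := Matrix.linftyOpNormedAlgebra
      have hcont : Continuous (Matrix.reindexAlgEquiv ℂ ℂ e.symm) := by
        have h1 : Continuous fun x : Matrix V V ℂ => x.submatrix ⇑e ⇑e :=
          continuous_id.matrix_submatrix ⇑e ⇑e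
        exact h1.congr fun x => by
          simp [Matrix.reindexAlgEquiv_apply, Matrix.reindex_apply]
      have key := NormedSpace.map_exp_of_mem_ball (𝕂 := ℂ) (Matrix.reindexAlgEquiv ℂ ℂ e.symm) hcont M
        ((NormedSpace.expSeries_radius_eq_top ℂ (Matrix V V ℂ)).symm ▸ edist_lt_top _ _)
      simp [Matrix.reindexAlgEquiv_apply, Matrix.reindex_apply] at key
      convert key using 2 <;> rfl
    rw [hMe] at hsub
    have hHe : H.submatrix ⇑e ⇑e = H := hsub
    have := congrFun (congrFun hHe w) x
    simpa [Matrix.submatrix_apply, he] using this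
  -- choose automorphisms
  choose φ hφ using htrans u
  set σ : V → V := fun w => φ w v with hσdef
  have hnorm1 : Complex.normSq (H u v) = 1 := by
    rw [← Complex.sq_norm]
    rw [hH, hM, hA] at *
    rw [hpst]; norm_num
  have hσ : ∀ w, Complex.normSq (H w (σ w)) = 1 := by
    intro w
    have h := hauto (φ w) u v
    rw [hφ w] at h
    simp only [hσdef]
    rw [h]
    exact hnorm1
  have hdiag : ∀ w, H w w = 0 := by
    have huu : H u u = 0 := hzero u v hnorm1 u huv
    intro w
    have h := hauto (φ w) u u
    rw [hφ w] at h
    exact h.trans huu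
  have hfpf : ∀ w, σ w ≠ w := by
    intro w h
    have h1 := hσ w
    rw [h, hdiag w] at h1
    simp at h1
  have hinv : Function.Involutive σ := by
    intro w
    by_contra hne
    have hne' : w ≠ σ (σ w) := fun h => hne h.symm
    have h1 : H (σ w) w = 0 := hzero (σ w) (σ (σ w)) (hσ (σ w)) w hne'
    have h2 : H (σ w) w = H w (σ w) := by
      have := congrFun (congrFun hHsymm w) (σ w)
      simpa [Matrix.transpose_apply] using this
    have h3 := hσ w
    rw [← h2, h1] at h3
    simp at h3
  exact even_card_of_fpf σ hinv hfpf
end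

section
/- For any integer n ≥ 1 and divisor d = 2^k of 2^n with 0 ≤ k ≤ n, the map sending z ∈ Z_{2^n} to its binary digit vector (z₀,…,z_{n−1}) ∈ (Z_2)^n is a graph isomorphism from Cay(Z_{2^n}, S(d)) to the cubelike graph X(C_d), where S(d) = {z ∈ Z_{2^n} : gcd(z, 2^n) = d} and C_d = {(c₀,…,c_{n−1}) ∈ (Z_2)^n : c_j = 0 for j < k and c_k = 1}. -/
/-- The binary digit map `z ↦ (z₀, …, z_{n-1})` from `ℤ/2ⁿ` to `(ℤ/2)ⁿ`. -/
def binDigits (n : ℕ) (z : ZMod (2 ^ n)) : Fin n → ZMod 2 :=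
  fun i => ((z.val / 2 ^ (i : ℕ)) % 2 : ℕ)

/-- The connection set `C_d` for the divisor `d = 2^k`. -/
def Cdiv (n k : ℕ) : Set (Fin n → ZMod 2) :=
  {c | ∀ j : Fin n, ((j : ℕ) < k → c j = 0) ∧ ((j : ℕ) = k → c j = 1)}

lemma digit_eq_iff (n : ℕ) (u v : ZMod (2 ^ n)) (j : ℕ) :
    ((u.val / 2 ^ j % 2 : ℕ) : ZMod 2) = ((v.val / 2 ^ j % 2 : ℕ) : ZMod 2)
      ↔ u.val.testBit j = v.val.testBit j := by
  have ha := Nat.mod_two_eq_zero_or_one (u.val / 2 ^ j)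
  have hb := Nat.mod_two_eq_zero_or_one (v.val / 2 ^ j)
  rw [Nat.testBit_eq_decide_div_mod_eq, Nat.testBit_eq_decide_div_mod_eq, decide_eq_decide]
  rcases ha with h1 | h1 <;> rcases hb with h2 | h2 <;>
    rw [h1, h2] <;> simp

lemma mod_two_pow_eq_iff (a b m : ℕ) :
    a % 2 ^ m = b % 2 ^ m ↔ ∀ j < m, a.testBit j = b.testBit j := by
  constructor
  · intro h j hj
    have := congrArg (fun x => Nat.testBit x j) h
    simpa [Nat.testBit_mod_two_pow, hj] using this
  · intro h
    apply Nat.eq_of_testBit_eq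
    intro j
    rw [Nat.testBit_mod_two_pow, Nat.testBit_mod_two_pow]
    by_cases hj : j < m
    · simp [hj, h j hj]
    · simp [hj]

lemma dvd_sub_val_iff (n m : ℕ) (hm : m ≤ n) (u v : ZMod (2 ^ n)) :
    2 ^ m ∣ (u - v).val ↔ ∀ j < m, u.val.testBit j = v.val.testBit j := by
  haveI : NeZero (2 ^ n) := ⟨pow_ne_zero _ two_ne_zero⟩
  have hdvd : (2 : ℕ) ^ m ∣ 2 ^ n := pow_dvd_pow 2 hm
  have key : ∀ w : ZMod (2 ^ n),
      ((w.val : ℕ) : ZMod (2 ^ m)) = ZMod.castHom hdvd (ZMod (2 ^ m)) w := by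
    intro w
    rw [ZMod.natCast_val, ZMod.castHom_apply]
  rw [← ZMod.natCast_eq_zero_iff, key, map_sub, sub_eq_zero,
    ← key, ← key, ZMod.natCast_eq_natCast_iff']
  exact mod_two_pow_eq_iff _ _ m

theorem gcd_graph_iso_cubelike_cyclic (n k : ℕ) (hn : 1 ≤ n) (hk : k ≤ n) :
    Function.Bijective (binDigits n) ∧
      ∀ u v : ZMod (2 ^ n),
        (Nat.gcd (u - v).val (2 ^ n) = 2 ^ k ↔
          binDigits n u - binDigits n v ∈ Cdiv n k) := by
  haveI : NeZero (2 ^ n) := ⟨pow_ne_zero _ two_ne_zero⟩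
  constructor
  · rw [Fintype.bijective_iff_injective_and_card]
    refine ⟨?_, by simp [ZMod.card, Fintype.card_fun]⟩
    intro u v h
    have hbit : ∀ j, u.val.testBit j = v.val.testBit j := by
      intro j
      by_cases hj : j < n
      · exact (digit_eq_iff n u v j).mp (congrFun h ⟨j, hj⟩)
      · rw [Nat.testBit_lt_two_pow (lt_of_lt_of_le u.val_lt (Nat.pow_le_pow_right (by norm_num) (by omega))),
          Nat.testBit_lt_two_pow (lt_of_lt_of_le v.val_lt (Nat.pow_le_pow_right (by norm_num) (by omega)))]
    exact ZMod.val_injective _ (Nat.eq_of_testBit_eq hbit)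
  · intro u v
    have hsub0 : ∀ x y : ZMod 2, x - y = 0 ↔ x = y := by decide
    have hsub1 : ∀ x y : ZMod 2, x - y = 1 ↔ ¬ x = y := by decide
    have hmem : binDigits n u - binDigits n v ∈ Cdiv n k ↔
        (∀ j < k, u.val.testBit j = v.val.testBit j) ∧
        (k < n → ¬ u.val.testBit k = v.val.testBit k) := by
      constructor
      · intro hc
        constructor
        · intro j hj
          have := (hc ⟨j, lt_of_lt_of_le hj hk⟩).1 hj
          rw [Pi.sub_apply] at this
          exact (digit_eq_iff n u v j).mp ((hsub0 _ _).mp this)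
        · intro hkn
          have := (hc ⟨k, hkn⟩).2 rfl
          rw [Pi.sub_apply] at this
          exact fun h => (hsub1 _ _).mp this ((digit_eq_iff n u v k).mpr h)
      · rintro ⟨h1, h2⟩ j
        constructor
        · intro hj
          rw [Pi.sub_apply, hsub0]
          exact (digit_eq_iff n u v (j : ℕ)).mpr (h1 _ hj)
        · intro hj
          rw [Pi.sub_apply, hsub1]
          subst hj
          exact fun h => h2 j.isLt ((digit_eq_iff n u v (j : ℕ)).mp h)
    rw [hmem]
    rcases eq_or_lt_of_le hk with hkn | hkn
    · subst hkn
      constructor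
      · intro hg
        have hdd : 2 ^ k ∣ (u - v).val := (dvd_of_eq hg.symm).trans (Nat.gcd_dvd_left _ _)
        exact ⟨fun j hj => (dvd_sub_val_iff k k le_rfl u v).mp hdd j hj,
          fun h => absurd h (lt_irrefl k)⟩
      · rintro ⟨h1, -⟩
        exact Nat.gcd_eq_right ((dvd_sub_val_iff k k le_rfl u v).mpr h1)
    · -- k < n
      have hdk : 2 ^ k ∣ (u - v).val ↔ ∀ j < k, u.val.testBit j = v.val.testBit j :=
        dvd_sub_val_iff n k hk u v
      have hdk1 : 2 ^ (k + 1) ∣ (u - v).val ↔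
          ∀ j < k + 1, u.val.testBit j = v.val.testBit j :=
        dvd_sub_val_iff n (k + 1) hkn u v
      constructor
      · intro hg
        have h1 : 2 ^ k ∣ (u - v).val := (dvd_of_eq hg.symm).trans (Nat.gcd_dvd_left _ _)
        have h2 : ¬ 2 ^ (k + 1) ∣ (u - v).val := by
          intro hd
          have : 2 ^ (k + 1) ∣ Nat.gcd (u - v).val (2 ^ n) :=
            Nat.dvd_gcd hd (pow_dvd_pow 2 hkn)
          rw [hg] at this
          have := Nat.le_of_dvd (by positivity) this
          exact absurd this (by simp [Nat.pow_lt_pow_right, Nat.not_le.mpr (Nat.pow_lt_pow_right one_lt_two (Nat.lt_succ_self k))])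
        refine ⟨hdk.mp h1, fun _ hb => ?_⟩
        exact h2 (hdk1.mpr fun j hj => by
          rcases Nat.lt_succ_iff_lt_or_eq.mp hj with h | h
          · exact hdk.mp h1 j h
          · subst h; exact hb)
      · rintro ⟨h1, h2⟩
        have hd1 : 2 ^ k ∣ (u - v).val := hdk.mpr h1
        have hd2 : ¬ 2 ^ (k + 1) ∣ (u - v).val := by
          intro hd
          exact h2 hkn (hdk1.mp hd k (Nat.lt_succ_self k))
        have hgd : Nat.gcd (u - v).val (2 ^ n) ∣ 2 ^ n := Nat.gcd_dvd_right _ _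
        obtain ⟨m, hm, hgm⟩ := (Nat.dvd_prime_pow Nat.prime_two).mp hgd
        have hkm : 2 ^ k ∣ 2 ^ m := hgm ▸ Nat.dvd_gcd hd1 (pow_dvd_pow 2 hk)
        have hkm' : k ≤ m := (Nat.pow_dvd_pow_iff_le_right one_lt_two).mp hkm
        have hmk : m ≤ k := by
          by_contra hc
          exact hd2 (dvd_trans (pow_dvd_pow 2 (by omega)) (hgm ▸ Nat.gcd_dvd_left _ _))
        rw [hgm, Nat.le_antisymm hmk hkm']
end

section
/- Every gcd-graph over a finite abelian group of order 2^n is isomorphic to a cubelike graph, i.e., to a Cayley graph over (Z_2)^n. -/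
namespace GcdCube

lemma sum_two_pow (m : ℕ) : ∑ j ∈ Finset.range m, 2 ^ j < 2 ^ m := by
  induction m with
  | zero => simp
  | succ m ih => rw [Finset.sum_range_succ, pow_succ]; omega

lemma sum_bits (m : ℕ) : ∀ a : ℕ, a < 2 ^ m →
    ∑ j ∈ Finset.range m, (a >>> j % 2) * 2 ^ j = a := by
  induction m with
  | zero => intro a ha; interval_cases a; simp
  | succ m ih =>
    intro a ha
    rw [Finset.sum_range_succ']
    have h2 : ∀ j : ℕ, a >>> (j + 1) = (a / 2) >>> j := by
      intro j
      rw [Nat.add_comm, Nat.shiftRight_add, Nat.shiftRight_one]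
    have hd : a / 2 < 2 ^ m := by
      have := Nat.pow_succ 2 m ▸ ha
      omega
    have := ih (a / 2) hd
    calc ∑ j ∈ Finset.range m, (a >>> (j+1) % 2) * 2 ^ (j+1) + (a >>> 0 % 2) * 2 ^ 0
        = 2 * (∑ j ∈ Finset.range m, ((a/2) >>> j % 2) * 2 ^ j) + a % 2 := by
          rw [Finset.mul_sum]
          simp only [h2, pow_succ, pow_zero, mul_one, Nat.shiftRight_zero]
          congr 1
          exact Finset.sum_congr rfl fun j _ => by ring
      _ = a := by rw [this]; omega

def ofBitsNat (m : ℕ) (w : Fin m → ZMod 2) : ℕ := ∑ j, (w j).val * 2 ^ (j : ℕ)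

lemma ofBitsNat_lt (m : ℕ) (w : Fin m → ZMod 2) : ofBitsNat m w < 2 ^ m := by
  have h1 : ofBitsNat m w ≤ ∑ j : Fin m, 2 ^ (j : ℕ) := by
    refine Finset.sum_le_sum fun j _ => ?_
    have : (w j).val < 2 := ZMod.val_lt _
    have := Nat.mul_le_mul_right (2 ^ (j : ℕ)) (show (w j).val ≤ 1 by omega)
    omega
  have h2 : ∑ j : Fin m, 2 ^ (j : ℕ) = ∑ j ∈ Finset.range m, 2 ^ j :=
    Fin.sum_univ_eq_sum_range (fun j => 2 ^ j) m
  have := sum_two_pow m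
  omega

def toBits (m : ℕ) (x : ZMod (2 ^ m)) (j : Fin m) : ZMod 2 := ((x.val >>> (j : ℕ) : ℕ) : ZMod 2)

lemma toBits_val (m : ℕ) (x : ZMod (2 ^ m)) (j : Fin m) :
    (toBits m x j).val = x.val >>> (j : ℕ) % 2 := by
  rw [toBits, ZMod.val_natCast]

lemma ofBits_toBits (m : ℕ) (x : ZMod (2 ^ m)) :
    ((ofBitsNat m (toBits m x) : ℕ) : ZMod (2 ^ m)) = x := by
  have hx : x.val < 2 ^ m := ZMod.val_lt x
  have key : ofBitsNat m (toBits m x) = x.val := by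
    rw [ofBitsNat]
    calc ∑ j : Fin m, (toBits m x j).val * 2 ^ (j : ℕ)
        = ∑ j : Fin m, (fun t => x.val >>> t % 2 * 2 ^ t) (j : ℕ) :=
          Finset.sum_congr rfl fun j _ => by rw [toBits_val]
      _ = ∑ j ∈ Finset.range m, x.val >>> j % 2 * 2 ^ j :=
          Fin.sum_univ_eq_sum_range (fun t => x.val >>> t % 2 * 2 ^ t) m
      _ = x.val := sum_bits m x.val hx
  rw [key, ZMod.natCast_val, ZMod.cast_id]

def bitEquiv (m : ℕ) : ZMod (2 ^ m) ≃ (Fin m → ZMod 2) := by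
  have hinj : Function.Injective (toBits m) :=
    Function.LeftInverse.injective (g := fun w => ((ofBitsNat m w : ℕ) : ZMod (2 ^ m)))
      (ofBits_toBits m)
  have hcard : Fintype.card (ZMod (2 ^ m)) = Fintype.card (Fin m → ZMod 2) := by
    simp [ZMod.card]
  have hbij : Function.Bijective (toBits m) :=
    (Fintype.bijective_iff_injective_and_card _).mpr ⟨hinj, hcard⟩
  have hsurj := hbij.surjective
  exact { toFun := toBits m
          invFun := fun w => ((ofBitsNat m w : ℕ) : ZMod (2 ^ m))
          left_inv := ofBits_toBits m
          right_inv := fun w => by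
            obtain ⟨x, rfl⟩ := hsurj w
            show toBits m ((ofBitsNat m (toBits m x) : ℕ) : ZMod (2 ^ m)) = toBits m x
            rw [ofBits_toBits] }

end GcdCube

namespace GcdCube

lemma modEq_iff_bits (k : ℕ) : ∀ a b : ℕ, (a % 2 ^ k = b % 2 ^ k ↔ ∀ j < k, a / 2 ^ j % 2 = b / 2 ^ j % 2) := by
  induction k with
  | zero => simp [Nat.mod_one]
  | succ k ih =>
    intro a b
    have hdec : ∀ c : ℕ, c % 2 ^ (k + 1) = 2 ^ k * (c / 2 ^ k % 2) + c % 2 ^ k := by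
      intro c
      have h1 : c % (2 ^ k * 2) / 2 ^ k = c / 2 ^ k % 2 := Nat.mod_mul_right_div_self c (2^k) 2
      have h2 : c % (2 ^ k * 2) % 2 ^ k = c % 2 ^ k := Nat.mod_mul_right_mod c (2^k) 2
      have h3 := Nat.div_add_mod (c % (2 ^ k * 2)) (2 ^ k)
      rw [h1, h2] at h3
      rw [pow_succ]
      omega
    constructor
    · intro h j hj
      have hk : a % 2 ^ k = b % 2 ^ k := by
        have ha : a % 2 ^ (k+1) % 2 ^ k = a % 2 ^ k :=
          Nat.mod_mod_of_dvd a (pow_dvd_pow 2 (Nat.le_succ k))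
        have hb : b % 2 ^ (k+1) % 2 ^ k = b % 2 ^ k :=
          Nat.mod_mod_of_dvd b (pow_dvd_pow 2 (Nat.le_succ k))
        rw [← ha, ← hb, h]
      by_cases hj' : j < k
      · exact (ih a b).mp hk j hj'
      · have hjk : j = k := by omega
        subst hjk
        have hda := hdec a
        have hdb := hdec b
        have hp : 0 < 2 ^ j := Nat.pow_pos (by norm_num)
        have hm : 2 ^ j * (a / 2 ^ j % 2) = 2 ^ j * (b / 2 ^ j % 2) := by omega
        exact Nat.eq_of_mul_eq_mul_left hp hm
    · intro h
      have hk : a % 2 ^ k = b % 2 ^ k := (ih a b).mpr fun j hj => h j (Nat.lt_succ_of_lt hj)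
      have hbit : a / 2 ^ k % 2 = b / 2 ^ k % 2 := h k (Nat.lt_succ_self k)
      rw [hdec a, hdec b, hk, hbit]

end GcdCube

namespace GcdCube

lemma dvd_sub_val_iff (m k : ℕ) (hk : k ≤ m) (x y : ZMod (2 ^ m)) :
    2 ^ k ∣ (x - y).val ↔ x.val % 2 ^ k = y.val % 2 ^ k := by
  have hdvd : (2 : ℕ) ^ k ∣ 2 ^ m := pow_dvd_pow 2 hk
  let f := ZMod.castHom hdvd (ZMod (2 ^ k))
  have hval : ∀ w : ZMod (2 ^ m), ((w.val : ℕ) : ZMod (2 ^ k)) = f w := fun w => by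
    rw [ZMod.natCast_val, ZMod.castHom_apply]
  rw [← ZMod.natCast_eq_zero_iff, hval, map_sub, sub_eq_zero, ← hval, ← hval,
    ZMod.natCast_eq_natCast_iff']

lemma dvd_ofBitsNat_iff (m k : ℕ) (hk : k ≤ m) (w : Fin m → ZMod 2) :
    2 ^ k ∣ ofBitsNat m w ↔ ∀ j : Fin m, (j : ℕ) < k → w j = 0 := by
  set f : ℕ → ℕ := fun t => (if h : t < m then (w ⟨t, h⟩).val else 0) * 2 ^ t with hf
  have hsum : ofBitsNat m w = ∑ j ∈ Finset.range m, f j := by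
    rw [ofBitsNat, ← Fin.sum_univ_eq_sum_range f m]
    exact Finset.sum_congr rfl fun j _ => by simp [hf, j.isLt]
  have hsplit : ∑ j ∈ Finset.range k, f j + ∑ j ∈ Finset.Ico k m, f j
      = ∑ j ∈ Finset.range m, f j := Finset.sum_range_add_sum_Ico f hk
  have htail : 2 ^ k ∣ ∑ j ∈ Finset.Ico k m, f j :=
    Finset.dvd_sum fun j hj =>
      Dvd.dvd.mul_left (pow_dvd_pow 2 (Finset.mem_Ico.mp hj).1) _
  have hhead_lt : ∑ j ∈ Finset.range k, f j < 2 ^ k := by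
    have hle : ∑ j ∈ Finset.range k, f j ≤ ∑ j ∈ Finset.range k, 2 ^ j := by
      refine Finset.sum_le_sum fun j _ => ?_
      show (if h : j < m then (w ⟨j, h⟩).val else 0) * 2 ^ j ≤ 2 ^ j
      split
      · next h => have := ZMod.val_lt (w ⟨j, h⟩); nlinarith [pow_pos (show 0<2 by norm_num) j]
      · simp
    exact lt_of_le_of_lt hle (sum_two_pow k)
  constructor
  · intro hd j hj
    have hd' : 2 ^ k ∣ ∑ i ∈ Finset.range k, f i := by
      rw [hsum, ← hsplit] at hd
      exact (Nat.dvd_add_right htail).mp (by rwa [Nat.add_comm] at hd)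
    have hzero : ∑ i ∈ Finset.range k, f i = 0 := Nat.eq_zero_of_dvd_of_lt hd' hhead_lt |>.symm ▸ rfl
    have := (Finset.sum_eq_zero_iff.mp (Nat.eq_zero_of_dvd_of_lt hd' hhead_lt)) (j : ℕ)
      (Finset.mem_range.mpr hj)
    have this2 : (if h : (j:ℕ) < m then (w ⟨(j:ℕ), h⟩).val else 0) * 2 ^ (j:ℕ) = 0 := this
    rw [dif_pos j.isLt] at this2
    have h2 : (0:ℕ) < 2 ^ (j : ℕ) := pow_pos (by norm_num) _
    have : (w ⟨(j : ℕ), j.isLt⟩).val = 0 := by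
      rcases Nat.mul_eq_zero.mp this2 with h | h
      · exact h
      · omega
    have : w ⟨(j : ℕ), j.isLt⟩ = 0 := by
      have := ZMod.val_injective 2 (a₁ := w ⟨(j:ℕ), j.isLt⟩) (a₂ := 0)
      simp_all [ZMod.val_zero]
    simpa using this
  · intro h0
    have hzero : ∑ i ∈ Finset.range k, f i = 0 := by
      refine Finset.sum_eq_zero fun j hj => ?_
      have hj' := Finset.mem_range.mp hj
      have hjm : j < m := lt_of_lt_of_le hj' hk
      show (if h : j < m then (w ⟨j, h⟩).val else 0) * 2 ^ j = 0
      rw [dif_pos hjm, h0 ⟨j, hjm⟩ hj', ZMod.val_zero, zero_mul]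
    rw [hsum, ← hsplit, hzero, zero_add]
    exact htail

end GcdCube

namespace GcdCube

lemma key (m : ℕ) (x y : ZMod (2 ^ m)) :
    Nat.gcd ((x - y).val) (2 ^ m)
      = Nat.gcd (((ofBitsNat m (toBits m x - toBits m y) : ℕ) : ZMod (2 ^ m)).val) (2 ^ m) := by
  set w : Fin m → ZMod 2 := toBits m x - toBits m y with hw
  have hBval : (((ofBitsNat m w : ℕ) : ZMod (2 ^ m))).val = ofBitsNat m w := by
    rw [ZMod.val_natCast, Nat.mod_eq_of_lt (ofBitsNat_lt m w)]
  -- bit equivalence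
  have hbit : ∀ j : Fin m, (w j = 0 ↔ x.val / 2 ^ (j:ℕ) % 2 = y.val / 2 ^ (j:ℕ) % 2) := by
    intro j
    have : w j = toBits m x j - toBits m y j := rfl
    rw [this, sub_eq_zero]
    constructor
    · intro h
      have := congrArg ZMod.val h
      rwa [toBits_val, toBits_val, Nat.shiftRight_eq_div_pow, Nat.shiftRight_eq_div_pow] at this
    · intro h
      apply ZMod.val_injective
      rwa [toBits_val, toBits_val, Nat.shiftRight_eq_div_pow, Nat.shiftRight_eq_div_pow]
  have hiff : ∀ k ≤ m, (2 ^ k ∣ (x - y).val ↔ 2 ^ k ∣ ofBitsNat m w) := by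
    intro k hk
    rw [dvd_sub_val_iff m k hk, dvd_ofBitsNat_iff m k hk, modEq_iff_bits]
    constructor
    · intro h j hj
      exact (hbit j).mpr (h (j : ℕ) hj)
    · intro h j hj
      exact (hbit ⟨j, lt_of_lt_of_le hj hk⟩).mp (h ⟨j, lt_of_lt_of_le hj hk⟩ hj)
  -- gcds are powers of two dividing 2^m
  have hgcd : ∀ a : ℕ, ∃ k ≤ m, Nat.gcd a (2 ^ m) = 2 ^ k := fun a => by
    have := Nat.gcd_dvd_right a (2 ^ m)
    exact (Nat.dvd_prime_pow Nat.prime_two).mp this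
  apply Nat.dvd_antisymm
  · obtain ⟨k, hk, hke⟩ := hgcd ((x - y).val)
    rw [hke]
    refine Nat.dvd_gcd ?_ (pow_dvd_pow 2 hk)
    rw [hBval]
    exact (hiff k hk).mp (hke ▸ Nat.gcd_dvd_left _ _)
  · obtain ⟨k, hk, hke⟩ := hgcd (((ofBitsNat m w : ℕ) : ZMod (2 ^ m)).val)
    rw [hke]
    refine Nat.dvd_gcd ?_ (pow_dvd_pow 2 hk)
    refine (hiff k hk).mpr ?_
    rw [← hBval]
    exact hke ▸ Nat.gcd_dvd_left _ _

end GcdCube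

theorem gcd_graph_iso_cubelike (r : ℕ) (n : Fin r → ℕ) (D : Set (Fin r → ℕ)) :
    ∃ (N : ℕ) (C : Set (Fin N → ZMod 2))
      (e : (∀ i, ZMod (2 ^ n i)) ≃ (Fin N → ZMod 2)),
      N = ∑ i, n i ∧
      ∀ u v : ∀ i, ZMod (2 ^ n i),
        ((fun i => Nat.gcd ((u - v) i).val (2 ^ n i)) ∈ D ↔ e u - e v ∈ C) := by
  classical
  set N := ∑ i, n i with hN
  have hcard : Fintype.card (Σ i : Fin r, Fin (n i)) = Fintype.card (Fin N) := by
    simp [hN]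
  let σ : (Σ i : Fin r, Fin (n i)) ≃ Fin N := Fintype.equivOfCardEq hcard
  let P : (∀ i : Fin r, Fin (n i) → ZMod 2) ≃ (Fin N → ZMod 2) :=
    (Equiv.piCurry fun (i : Fin r) (_ : Fin (n i)) => ZMod 2).symm.trans
      (Equiv.arrowCongr σ (Equiv.refl (ZMod 2)))
  let Φ : (∀ i, ZMod (2 ^ n i)) ≃ (∀ i : Fin r, Fin (n i) → ZMod 2) :=
    Equiv.piCongrRight fun i => GcdCube.bitEquiv (n i)
  let e := Φ.trans P
  have hPsub : ∀ a b : ∀ i : Fin r, Fin (n i) → ZMod 2, P a - P b = P (a - b) := by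
    intro a b; funext x; rfl
  have hsymm : ∀ u v : ∀ i, ZMod (2 ^ n i), ∀ i : Fin r,
      e.symm (e u - e v) i
        = (GcdCube.bitEquiv (n i)).symm
            (GcdCube.bitEquiv (n i) (u i) - GcdCube.bitEquiv (n i) (v i)) := by
    intro u v i
    have h1 : e u - e v = P (Φ u - Φ v) := hPsub (Φ u) (Φ v)
    rw [h1]
    show Φ.symm (P.symm (P (Φ u - Φ v))) i = _
    rw [Equiv.symm_apply_apply]
    rfl
  refine ⟨N, {c : Fin N → ZMod 2 |
      (fun i => Nat.gcd ((e.symm c i).val) (2 ^ n i)) ∈ D}, e, rfl, ?_⟩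
  intro u v
  have hfun : (fun i => Nat.gcd ((u - v) i).val (2 ^ n i))
      = fun i => Nat.gcd ((e.symm (e u - e v) i).val) (2 ^ n i) := by
    funext i
    rw [hsymm u v i]
    exact GcdCube.key (n i) (u i) (v i)
  constructor
  · intro h; rw [Set.mem_setOf_eq, ← hfun]; exact h
  · intro h; rw [Set.mem_setOf_eq, ← hfun] at h; exact h
end

section
/- Let A be a symmetric complex matrix with exp(iπA) = (−1)^m I for an odd integer m, and let B be a symmetric matrix with integer eigenvalues all of the same parity. Then exp(iπ(A ⊗ B)) is a unimodular scalar multiple of the identity. -/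
open Matrix Kronecker Complex

section Aux

open NormedSpace

variable {m p : Type*} [Fintype m] [DecidableEq m] [Fintype p] [DecidableEq p]

private lemma kron_sum_right {ι : Type*} (S : Finset ι) (A : Matrix m m ℂ)
    (G : ι → Matrix p p ℂ) :
    A ⊗ₖ (∑ i ∈ S, G i) = ∑ i ∈ S, A ⊗ₖ G i := by
  induction S using Finset.cons_induction with
  | empty => simp [Matrix.kronecker_zero]
  | cons a S ha ih => rw [Finset.sum_cons, Finset.sum_cons, Matrix.kronecker_add, ih]

private lemma kron_pow (x : Matrix m m ℂ) (F : Matrix p p ℂ) (hF : F * F = F) :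
    ∀ n : ℕ, (x ⊗ₖ F) ^ (n + 1) = (x ^ (n + 1)) ⊗ₖ F := by
  intro n
  induction n with
  | zero => simp
  | succ n ih =>
    rw [pow_succ, ih, ← Matrix.mul_kronecker_mul, hF, ← pow_succ]

private lemma exp_kron_proj (x : Matrix m m ℂ) (F : Matrix p p ℂ) (hF : F * F = F) :
    NormedSpace.exp (x ⊗ₖ F) = 1 + ((NormedSpace.exp x) ⊗ₖ F - (1 : Matrix m m ℂ) ⊗ₖ F) := by
  letI : SeminormedRing (Matrix m m ℂ) := Matrix.linftyOpSemiNormedRing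
  letI : NormedRing (Matrix m m ℂ) := Matrix.linftyOpNormedRing
  letI : NormedAlgebra ℂ (Matrix m m ℂ) := Matrix.linftyOpNormedAlgebra
  letI : SeminormedRing (Matrix (m × p) (m × p) ℂ) := Matrix.linftyOpSemiNormedRing
  letI : NormedRing (Matrix (m × p) (m × p) ℂ) := Matrix.linftyOpNormedRing
  letI : NormedAlgebra ℂ (Matrix (m × p) (m × p) ℂ) := Matrix.linftyOpNormedAlgebra
  let L : Matrix m m ℂ →ₗ[ℂ] Matrix (m × p) (m × p) ℂ :=
    { toFun := fun Y => Y ⊗ₖ F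
      map_add' := fun Y Z => Matrix.add_kronecker Y Z F
      map_smul' := fun c Y => Matrix.smul_kronecker c Y F }
  have hLcont : Continuous L := L.continuous_of_finiteDimensional
  have hsum : Summable fun n : ℕ => (n.factorial : ℂ)⁻¹ • x ^ n := expSeries_summable' x
  have hg : Summable fun n : ℕ => (n.factorial : ℂ)⁻¹ • ((x ^ n) ⊗ₖ F) := by
    have := hsum.map L.toAddMonoidHom hLcont
    simpa [L, Function.comp_def, Matrix.smul_kronecker] using this
  have hh : Summable fun n : ℕ =>
      (if n = 0 then ((1 : Matrix (m × p) (m × p) ℂ)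
        - (1 : Matrix m m ℂ) ⊗ₖ F) else 0) :=
    (hasSum_ite_eq 0 _).summable
  have key : ∀ n : ℕ, (n.factorial : ℂ)⁻¹ • (x ⊗ₖ F) ^ n
      = (n.factorial : ℂ)⁻¹ • ((x ^ n) ⊗ₖ F)
        + (if n = 0 then ((1 : Matrix (m × p) (m × p) ℂ)
            - (1 : Matrix m m ℂ) ⊗ₖ F) else 0) := by
    intro n
    cases n with
    | zero => simp
    | succ n => rw [kron_pow x F hF n]; simp
  rw [NormedSpace.exp_eq_tsum ℂ]
  calc (∑' n : ℕ, (n.factorial : ℂ)⁻¹ • (x ⊗ₖ F) ^ n)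
      = ∑' n : ℕ, ((n.factorial : ℂ)⁻¹ • ((x ^ n) ⊗ₖ F)
          + (if n = 0 then ((1 : Matrix (m × p) (m × p) ℂ)
              - (1 : Matrix m m ℂ) ⊗ₖ F) else 0)) := tsum_congr key
    _ = (∑' n : ℕ, (n.factorial : ℂ)⁻¹ • ((x ^ n) ⊗ₖ F))
          + ∑' n : ℕ, (if n = 0 then ((1 : Matrix (m × p) (m × p) ℂ)
              - (1 : Matrix m m ℂ) ⊗ₖ F) else 0) := Summable.tsum_add hg hh
    _ = (NormedSpace.exp x) ⊗ₖ F + ((1 : Matrix (m × p) (m × p) ℂ) - (1 : Matrix m m ℂ) ⊗ₖ F) := by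
        rw [tsum_ite_eq]
        congr 1
        have h1 : ∀ n : ℕ, (n.factorial : ℂ)⁻¹ • ((x ^ n) ⊗ₖ F) = L ((n.factorial : ℂ)⁻¹ • x ^ n) :=
          fun n => (L.map_smul _ _).symm
        simp_rw [h1]
        have htg : (∑' n : ℕ, L ((n.factorial : ℂ)⁻¹ • x ^ n))
            = L (∑' n : ℕ, (n.factorial : ℂ)⁻¹ • x ^ n) := by
          simpa [Function.comp_def] using (hsum.hasSum.map L.toAddMonoidHom hLcont).tsum_eq
        have hex : (∑' n : ℕ, (n.factorial : ℂ)⁻¹ • x ^ n) = NormedSpace.exp x := by rw [NormedSpace.exp_eq_tsum ℂ]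
        rw [htg, hex]; rfl
    _ = 1 + ((NormedSpace.exp x) ⊗ₖ F - (1 : Matrix m m ℂ) ⊗ₖ F) := by abel

private lemma exp_int_smul (M : Matrix m m ℂ) (hM : NormedSpace.exp M = -1) (n : ℤ) :
    NormedSpace.exp ((n : ℂ) • M) = if Even n then 1 else -1 := by
  rw [Int.cast_smul_eq_zsmul, Matrix.exp_zsmul, hM]
  obtain ⟨a, rfl | rfl⟩ := n.eq_nat_or_neg
  · rw [zpow_natCast]
    rcases Nat.even_or_odd a with h | h
    · rw [h.neg_one_pow, if_pos (by exact_mod_cast h)]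
    · rw [h.neg_one_pow, if_neg (by simpa [Int.even_coe_nat] using Nat.not_even_iff_odd.mpr h)]
  · rw [Matrix.zpow_neg_natCast]
    rcases Nat.even_or_odd a with h | h
    · rw [h.neg_one_pow, inv_one, if_pos (by rw [even_neg, Int.even_coe_nat]; exact h)]
    · rw [h.neg_one_pow,
        if_neg (by simpa [even_neg, Int.even_coe_nat] using Nat.not_even_iff_odd.mpr h)]
      exact Matrix.inv_eq_right_inv (by simp)

private lemma exp_sum_kron {q : ℕ} (F : Fin q → Matrix p p ℂ)
    (hproj : ∀ s, F s * F s = F s) (horth : ∀ r s, r ≠ s → F r * F s = 0)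
    (γ : ℂ) (x : Fin q → Matrix m m ℂ)
    (hx : ∀ s, NormedSpace.exp (x s) = γ • 1)
    (S : Finset (Fin q)) :
    NormedSpace.exp (∑ s ∈ S, (x s) ⊗ₖ F s)
      = 1 + (γ - 1) • ∑ s ∈ S, (1 : Matrix m m ℂ) ⊗ₖ F s := by
  induction S using Finset.cons_induction with
  | empty => simp [NormedSpace.exp_zero]
  | cons a S ha ih =>
    have hcomm : Commute ((x a) ⊗ₖ F a) (∑ s ∈ S, (x s) ⊗ₖ F s) := by
      refine Commute.sum_right _ _ _ fun s hs => ?_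
      have hne : a ≠ s := by rintro rfl; exact ha hs
      have h1 : ((x a) ⊗ₖ F a) * ((x s) ⊗ₖ F s) = 0 := by
        rw [← Matrix.mul_kronecker_mul, horth a s hne, Matrix.kronecker_zero]
      have h2 : ((x s) ⊗ₖ F s) * ((x a) ⊗ₖ F a) = 0 := by
        rw [← Matrix.mul_kronecker_mul, horth s a hne.symm, Matrix.kronecker_zero]
      exact h1.trans h2.symm
    rw [Finset.sum_cons, Matrix.exp_add_of_commute _ _ hcomm, ih,
      exp_kron_proj (x a) (F a) (hproj a), hx a, Matrix.smul_kronecker]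
    have hstep : γ • ((1 : Matrix m m ℂ) ⊗ₖ F a) - (1 : Matrix m m ℂ) ⊗ₖ F a
        = (γ - 1) • ((1 : Matrix m m ℂ) ⊗ₖ F a) := by rw [sub_smul, one_smul]
    rw [hstep, Finset.sum_cons]
    have hcross : ((1 : Matrix m m ℂ) ⊗ₖ F a) * (∑ s ∈ S, (1 : Matrix m m ℂ) ⊗ₖ F s) = 0 := by
      rw [Finset.mul_sum]
      refine Finset.sum_eq_zero fun s hs => ?_
      have hne : a ≠ s := by rintro rfl; exact ha hs
      rw [← Matrix.mul_kronecker_mul, horth a s hne, Matrix.kronecker_zero]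
    have h2 : ((γ - 1) • ((1 : Matrix m m ℂ) ⊗ₖ F a))
        * ((γ - 1) • ∑ s ∈ S, (1 : Matrix m m ℂ) ⊗ₖ F s) = 0 := by
      rw [Matrix.smul_mul, Matrix.mul_smul, hcross, smul_zero, smul_zero]
    simp only [add_mul, one_mul, mul_add, mul_one, h2, add_zero, smul_add]
    abel

end Aux

theorem exp_kronecker_scalar_of_same_parity {m p : Type*}
    [Fintype m] [DecidableEq m] [Fintype p] [DecidableEq p]
    (A : Matrix m m ℂ) (hA : A.IsSymm) (k : ℤ) (hk : Odd k)
    (hexpA : NormedSpace.exp (((Real.pi : ℂ) * Complex.I) • A) = ((-1 : ℂ) ^ k) • 1)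
    (q : ℕ) (B : Matrix p p ℂ) (hBsymm : B.IsSymm)
    (μ : Fin q → ℤ) (F : Fin q → Matrix p p ℂ)
    (hB : B = ∑ s, (μ s : ℂ) • F s)
    (hsum : (∑ s, F s) = 1)
    (hproj : ∀ s, F s * F s = F s)
    (horth : ∀ r s, r ≠ s → F r * F s = 0)
    (hparity : ∀ s t, μ s % 2 = μ t % 2) :
    ∃ γ : ℂ, ‖γ‖ = 1 ∧
      NormedSpace.exp (((Real.pi : ℂ) * Complex.I) • (A ⊗ₖ B)) = γ • 1 := by
  set M : Matrix m m ℂ := ((Real.pi : ℂ) * Complex.I) • A with hMdef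
  have hM : NormedSpace.exp M = -1 := by
    rw [hMdef, hexpA, hk.neg_one_zpow, neg_smul, one_smul]
  have hγ : ∃ γ : ℂ, ‖γ‖ = 1 ∧
      ∀ s, NormedSpace.exp ((μ s : ℂ) • M) = γ • 1 := by
    by_cases hev : ∀ s, Even (μ s)
    · refine ⟨1, by simp, fun s => ?_⟩
      rw [exp_int_smul M hM, if_pos (hev s), one_smul]
    · push_neg at hev
      obtain ⟨t, ht⟩ := hev
      refine ⟨-1, by simp, fun s => ?_⟩
      have hs : ¬ Even (μ s) := by
        rw [Int.not_even_iff] at ht ⊢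
        rw [hparity s t, ht]
      rw [exp_int_smul M hM, if_neg hs, neg_smul, one_smul]
  obtain ⟨γ, hγabs, hxs⟩ := hγ
  refine ⟨γ, hγabs, ?_⟩
  have hdecomp : ((Real.pi : ℂ) * Complex.I) • (A ⊗ₖ B)
      = ∑ s, ((μ s : ℂ) • M) ⊗ₖ F s := by
    calc ((Real.pi : ℂ) * Complex.I) • (A ⊗ₖ B)
        = M ⊗ₖ (∑ s, (μ s : ℂ) • F s) := by rw [Matrix.smul_kronecker, hB]
      _ = ∑ s, M ⊗ₖ ((μ s : ℂ) • F s) := kron_sum_right _ _ _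
      _ = ∑ s, ((μ s : ℂ) • M) ⊗ₖ F s := by
          refine Finset.sum_congr rfl fun s _ => ?_
          rw [Matrix.kronecker_smul, ← Matrix.smul_kronecker]
  rw [hdecomp, exp_sum_kron F hproj horth γ _ hxs Finset.univ, ← kron_sum_right, hsum,
    Matrix.one_kronecker_one, sub_smul, one_smul]
  abel
end
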